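/- Let T be a tree with |T| = n ≥ 1, let ε > 0, V : {1,…,n} → ℂ and F : {1,…,n+1} → ℝ. Define Ω_T(V,F) ∈ ℂ by recursion on T: for T = T₁ ∨ T₂ with k := |T₁|, Ω_T(V,F) := i · L · V(k+1) · R / ( i F(1) − i F(n+1) + nε ), where L := −1 if T₁ = | and otherwise L := Ω_{T₁}( (V(1),…,V(k)), (F(1),…,F(k+1)) ), and R := 1 if T₂ = | and otherwise R := Ω_{T₂}( (V(k+2),…,V(n)), (F(k+2),…,F(n+1)) ). Let γ := γ_T be the lexicographically smallest element of S_T, and for 1 ≤ j ≤ n set l(j) := min{ p ≤ j : γ(m) ≥ γ(j) for all m with p ≤ m ≤ j } and r(j) := max{ p ≥ j : γ(m) ≥ γ(j) for all m with j ≤ m ≤ p }. Let d(T) be the number of right-pointing leaves of T, defined recursively by d(T₁ ∨ T₂) = (0 if T₁ = |, else d(T₁)) + (1 if T₂ = |, else d(T₂)). Then Ω_T(V,F) = (−i)ⁿ (−1)^{d(T)−1} · ( Π_{j=1}^{n} V(j) ) · Π_{j=1}^{n} ( i F(l(j)) − i F(r(j)+1) + (r(j)−l(j)+1)ε )^{−1}.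 -/

import Mathlib

/-- The minimum of `a :: l` (computed by folding `min`) is a member of `a :: l`. -/
lemma foldr_min_mem (a : ℤ) : ∀ l : List ℤ, l.foldr min a ∈ a :: l := by
  intro l
  induction l with
  | nil => simp
  | cons b l ih =>
    simp only [List.foldr_cons]
    rcases min_choice b (l.foldr min a) with h | h
    · rw [h]; simp
    · rw [h]
      rcases List.mem_cons.mp ih with h' | h'
      · simp [h']
      · simp [h']

/-- The planar binary tree `φ(I)` associated to a list `I` of (distinct) integers:
`φ` of the empty list is the empty tree `|`, and `φ(I) = φ(I₁) ∨ φ(I₂)` where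
`I = I₁ · (min I) · I₂` is the splitting of `I` at its minimal entry. -/
def phi : List ℤ → Tree Unit
  | [] => Tree.nil
  | a :: l =>
    Tree.node ()
      (phi ((a :: l).take ((a :: l).idxOf (l.foldr min a))))
      (phi ((a :: l).drop ((a :: l).idxOf (l.foldr min a) + 1)))
termination_by l => l.length
decreasing_by
  · have hm := foldr_min_mem a l
    have hk := List.idxOf_lt_length_iff.mpr hm
    simp only [List.length_take, List.length_cons, List.foldr_attach] at *
    omega
  · simp only [List.length_drop, List.length_cons]
    omega

/-- The standardization of a list `I` of distinct integers: the list whose `j`-th entry is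
the (1-indexed) position of `I_j` in the increasing ordering of the entries of `I`. -/
def stdz (I : List ℤ) : List ℤ :=
  I.map (fun x => ((I.filter (fun y => y < x)).length : ℤ) + 1)

/-- `l` is (the list of values of) a permutation of `{1, …, n}`. -/
def IsPermList (n : ℕ) (l : List ℤ) : Prop :=
  l.Perm ((List.range n).map (fun k => (k : ℤ) + 1))

/-- `S_T`: the set of permutations `σ ∈ S_{|T|}` (identified with their lists of values
`(σ(1),…,σ(n))`) such that `φ(σ) = T`. -/
def STree (T : Tree Unit) : Set (List ℤ) :=
  {l | IsPermList T.numNodes l ∧ phi l = T}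

/-- The complex number `Ω_T(V,F)` attached to a tree `T` (with `|T| = n`), a family
`V : {1,…,n} → ℂ` of matrix elements and a family `F : {1,…,n+1} → ℝ` of energies,
defined by recursion on `T`: for `T = T₁ ∨ T₂` with `k = |T₁|`,
`Ω_T(V,F) = i·L·V(k+1)·R / (i F(1) − i F(n+1) + nε)` where `L = −1` if `T₁ = |` and
`L = Ω_{T₁}((V(1),…,V(k)), (F(1),…,F(k+1)))` otherwise, and `R = 1` if `T₂ = |` and
`R = Ω_{T₂}((V(k+2),…,V(n)), (F(k+2),…,F(n+1)))` otherwise. (The value on the empty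
tree is irrelevant junk.) -/
noncomputable def OmegaC (ε : ℝ) : Tree Unit → (ℕ → ℂ) → (ℕ → ℝ) → ℂ
  | BinaryTree.nil, _, _ => 1
  | BinaryTree.node _ T₁ T₂, V, F =>
    (Complex.I * (if T₁ = Tree.nil then -1 else OmegaC ε T₁ V F)
        * V (T₁.numNodes + 1)
        * (if T₂ = Tree.nil then 1 else
            OmegaC ε T₂ (fun j => V (j + (T₁.numNodes + 1)))
              (fun j => F (j + (T₁.numNodes + 1))))) /
      (Complex.I * (F 1 : ℂ) - Complex.I * (F (T₁.numNodes + T₂.numNodes + 1 + 1) : ℂ)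
        + ((T₁.numNodes + T₂.numNodes + 1 : ℕ) : ℂ) * (ε : ℂ))

/-- 1-indexed access to the entries of the word `γ` (junk value `0` out of range). -/
def gv (γ : List ℤ) (p : ℕ) : ℤ := γ.getD (p - 1) 0

/-- `l(j) = min { p ≤ j : γ(m) ≥ γ(j) for all m with p ≤ m ≤ j }` (positions are
1-indexed). -/
noncomputable def lfun (γ : List ℤ) (j : ℕ) : ℕ :=
  sInf {p | 1 ≤ p ∧ p ≤ j ∧ ∀ m, p ≤ m → m ≤ j → gv γ j ≤ gv γ m}

/-- `r(j) = max { p ≥ j : γ(m) ≥ γ(j) for all m with j ≤ m ≤ p }` (positions are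
1-indexed, bounded by the length `n` of `γ`). -/
noncomputable def rfun (γ : List ℤ) (j : ℕ) : ℕ :=
  sSup {p | j ≤ p ∧ p ≤ γ.length ∧ ∀ m, j ≤ m → m ≤ p → gv γ j ≤ gv γ m}

/-- The number of right-pointing leaves of a tree. -/
def dT : Tree Unit → ℕ
  | BinaryTree.nil => 0
  | BinaryTree.node _ T₁ T₂ =>
      (if T₁ = Tree.nil then 0 else dT T₁) + (if T₂ = Tree.nil then 1 else dT T₂)

lemma foldr_min_le (a : ℤ) (l : List ℤ) : ∀ x ∈ a :: l, l.foldr min a ≤ x := by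
  induction l with
  | nil => simp
  | cons b l ih =>
    intro x hx
    simp only [List.foldr_cons]
    rcases List.mem_cons.mp hx with h | h
    · subst h
      exact le_trans (min_le_right _ _) (ih x (by simp))
    · rcases List.mem_cons.mp h with h' | h'
      · subst h'; exact min_le_left _ _
      · exact le_trans (min_le_right _ _) (ih x (by simp [h']))

lemma foldr_min_eq {a x : ℤ} {l : List ℤ} (hx : x ∈ a :: l) (hle : ∀ y ∈ a :: l, x ≤ y) :
    l.foldr min a = x :=
  le_antisymm (foldr_min_le a l x hx) (hle _ (foldr_min_mem a l))

lemma indexOf_append_cons_self {A B : List ℤ} {x : ℤ} (hA : x ∉ A) :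
    (A ++ x :: B).idxOf x = A.length := by
  induction A with
  | nil => simp
  | cons a A ih =>
    have hax : ¬ (a == x) := by
      simp only [List.mem_cons, not_or] at hA
      simp [Ne.symm hA.1]
    simp only [List.cons_append, List.idxOf_cons, hax, cond_false, List.length_cons]
    rw [ih (fun h => hA (List.mem_cons_of_mem _ h))]

lemma phi_split (A B : List ℤ) (x : ℤ) (hA : ∀ y ∈ A, x < y) (hB : ∀ y ∈ B, x < y) :
    phi (A ++ x :: B) = Tree.node () (phi A) (phi B) := by
  obtain ⟨a, t, h⟩ : ∃ a t, A ++ x :: B = a :: t := by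
    cases A with
    | nil => exact ⟨x, B, rfl⟩
    | cons a A => exact ⟨a, A ++ x :: B, rfl⟩
  rw [h, phi]
  have hmem : x ∈ a :: t := by rw [← h]; simp
  have hle : ∀ y ∈ a :: t, x ≤ y := by
    rw [← h]
    intro y hy
    rcases List.mem_append.mp hy with h' | h'
    · exact (hA y h').le
    · rcases List.mem_cons.mp h' with h'' | h''
      · exact h''.ge
      · exact (hB y h'').le
  rw [foldr_min_eq hmem hle, ← h,
    indexOf_append_cons_self (fun hxA => lt_irrefl x (hA x hxA)), List.take_left]
  congr 1
  have : A.length + 1 = (A ++ [x]).length := by simp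
  rw [this, show A ++ x :: B = (A ++ [x]) ++ B by simp, List.drop_left]

lemma phi_nil : phi [] = Tree.nil := by rw [phi]

lemma phi_decomp {l : List ℤ} (hne : l ≠ []) (hnd : l.Nodup) :
    ∃ A x B, l = A ++ x :: B ∧ (∀ y ∈ A, x < y) ∧ (∀ y ∈ B, x < y) := by
  obtain ⟨a, t, rfl⟩ := List.exists_cons_of_ne_nil hne
  set x := t.foldr min a with hx
  have hmem : x ∈ a :: t := foldr_min_mem a t
  have hle : ∀ y ∈ a :: t, x ≤ y := foldr_min_le a t
  obtain ⟨A, B, hAB⟩ := List.append_of_mem hmem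
  refine ⟨A, x, B, hAB, ?_, ?_⟩
  · intro y hy
    have hyl : y ∈ a :: t := by rw [hAB]; simp [hy]
    refine lt_of_le_of_ne (hle y hyl) ?_
    intro hxy
    rw [hAB, List.nodup_append] at hnd
    exact hnd.2.2 y hy x (by simp) hxy.symm
  · intro y hy
    have hyl : y ∈ a :: t := by rw [hAB]; simp [hy]
    refine lt_of_le_of_ne (hle y hyl) ?_
    intro hxy
    rw [hAB] at hnd
    have := (List.nodup_append.mp hnd).2.1
    exact (List.nodup_cons.mp this).1 (hxy ▸ hy)

lemma phi_len_aux : ∀ n : ℕ, ∀ l : List ℤ, l.length ≤ n → l.Nodup →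
    (phi l).numNodes = l.length := by
  intro n
  induction n with
  | zero =>
    intro l hl _
    rw [List.length_eq_zero_iff.mp (Nat.le_zero.mp hl), phi_nil]
    rfl
  | succ n ih =>
    intro l hl hnd
    rcases eq_or_ne l [] with rfl | hne
    · rw [phi_nil]; rfl
    · obtain ⟨A, x, B, rfl, hA, hB⟩ := phi_decomp hne hnd
      rw [List.nodup_append] at hnd
      have hlen : A.length + B.length + 1 = (A ++ x :: B).length := by simp; omega
      rw [phi_split A B x hA hB]
      have h1 : (phi A).numNodes = A.length :=
        ih A (by simp at hl ⊢; omega) hnd.1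
      have h2 : (phi B).numNodes = B.length :=
        ih B (by simp at hl ⊢; omega) (List.nodup_cons.mp hnd.2.1).2
      simp [Tree.numNodes, h1, h2]; omega

lemma phi_len {l : List ℤ} (hnd : l.Nodup) : (phi l).numNodes = l.length :=
  phi_len_aux l.length l le_rfl hnd

lemma phi_eq_nil_iff {l : List ℤ} : phi l = Tree.nil ↔ l = [] := by
  constructor
  · intro h
    cases l with
    | nil => rfl
    | cons a t => rw [phi] at h; exact absurd h (by simp)
  · rintro rfl; exact phi_nil

lemma phi_map_add (c : ℤ) : ∀ n : ℕ, ∀ l : List ℤ, l.length ≤ n → l.Nodup →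
    phi (l.map (· + c)) = phi l := by
  intro n
  induction n with
  | zero =>
    intro l hl _
    rw [List.length_eq_zero_iff.mp (Nat.le_zero.mp hl)]
    simp [phi_nil]
  | succ n ih =>
    intro l hl hnd
    rcases eq_or_ne l [] with rfl | hne
    · simp [phi_nil]
    · obtain ⟨A, x, B, rfl, hA, hB⟩ := phi_decomp hne hnd
      rw [List.nodup_append] at hnd
      simp only [List.map_append, List.map_cons]
      rw [phi_split A B x hA hB, phi_split]
      · congr 1
        · exact ih A (by simp at hl ⊢; omega) hnd.1
        · exact ih B (by simp at hl ⊢; omega) (List.nodup_cons.mp hnd.2.1).2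
      · intro y hy
        simp only [List.mem_map] at hy
        obtain ⟨z, hz, rfl⟩ := hy
        exact add_lt_add_left (hA z hz) c
      · intro y hy
        simp only [List.mem_map] at hy
        obtain ⟨z, hz, rfl⟩ := hy
        exact add_lt_add_left (hB z hz) c

def gammaT : Tree Unit → List ℤ
  | BinaryTree.nil => []
  | BinaryTree.node _ T₁ T₂ =>
      (gammaT T₁).map (· + 1) ++ 1 :: (gammaT T₂).map (· + ((T₁.numNodes : ℤ) + 1))

lemma gammaT_spec : ∀ T : Tree Unit, (gammaT T).length = T.numNodes ∧ (gammaT T).Nodup ∧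
    ∀ x ∈ gammaT T, 1 ≤ x ∧ x ≤ (T.numNodes : ℤ) := by
  intro T
  induction T with
  | nil => simp [gammaT]
  | node u T₁ T₂ ih1 ih2 =>
    obtain ⟨hl1, hn1, hb1⟩ := ih1
    obtain ⟨hl2, hn2, hb2⟩ := ih2
    have hnum : (Tree.node u T₁ T₂).numNodes = T₁.numNodes + T₂.numNodes + 1 := rfl
    refine ⟨?_, ?_, ?_⟩
    · simp [gammaT, hnum, hl1, hl2]; dsimp only [Tree.numNodes] at *; omega
    · rw [gammaT, List.nodup_append, List.nodup_cons]
      refine ⟨(hn1.map ?_), ⟨?_, hn2.map ?_⟩, ?_⟩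
      · intro a b h; simpa using h
      · simp only [List.mem_map, not_exists]
        rintro z ⟨hz, hz1⟩
        have := (hb2 z hz).1
        omega
      · intro a b h; simpa using h
      · intro a ha b hb hab; subst hab
        simp only [List.mem_map] at ha
        obtain ⟨z, hz, rfl⟩ := ha
        have h1 := hb1 z hz
        rcases List.mem_cons.mp hb with h | h
        · omega
        · simp only [List.mem_map] at h
          obtain ⟨w, hw, hww⟩ := h
          have h2 := hb2 w hw; dsimp only [Tree.numNodes] at *; omega
    · intro x hx
      rw [gammaT] at hx
      rcases List.mem_append.mp hx with h | h
      · simp only [List.mem_map] at h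
        obtain ⟨z, hz, rfl⟩ := h
        have := hb1 z hz
        rw [hnum]; push_cast; dsimp only [Tree.numNodes] at *; omega
      · rcases List.mem_cons.mp h with h | h
        · subst h; rw [hnum]; push_cast; refine ⟨trivial, ?_⟩; have := Int.ofNat_nonneg T₁.numNodes; have := Int.ofNat_nonneg T₂.numNodes; omega
        · simp only [List.mem_map] at h
          obtain ⟨z, hz, rfl⟩ := h
          have := hb2 z hz
          rw [hnum]; push_cast; dsimp only [Tree.numNodes] at *; omega

lemma isPermList_def (n : ℕ) (l : List ℤ) :
    IsPermList n l ↔ l.Perm ((List.range n).map (fun k : ℕ => (k : ℤ) + 1)) := by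
  unfold IsPermList
  have : (do let a ← List.range n; pure ((a : ℤ))) = (List.range n).map (fun a : ℕ => (a:ℤ)) := by
    show (List.range n).flatMap _ = _
    induction (List.range n) with
    | nil => rfl
    | cons b t ih => simp_all
  rw [this, List.map_map]
  rfl

lemma isPermList_iff {n : ℕ} {l : List ℤ} :
    IsPermList n l ↔ l.Nodup ∧ l.length = n ∧ ∀ x ∈ l, 1 ≤ x ∧ x ≤ (n : ℤ) := by
  set R : List ℤ := (List.range n).map (fun k : ℕ => (k : ℤ) + 1) with hR
  have hRnd : R.Nodup := List.Nodup.map (fun a b h => by omega) List.nodup_range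
  have hRlen : R.length = n := by simp [hR]
  have hRmem : ∀ x : ℤ, x ∈ R ↔ 1 ≤ x ∧ x ≤ (n : ℤ) := by
    intro x
    simp only [hR, List.mem_map, List.mem_range]
    constructor
    · rintro ⟨k, hk, rfl⟩; omega
    · rintro ⟨h1, h2⟩
      exact ⟨(x - 1).toNat, by omega, by omega⟩
  rw [isPermList_def]
  constructor
  · intro h
    refine ⟨h.nodup_iff.mpr hRnd, by rw [h.length_eq, hRlen], fun x hx => (hRmem x).mp (h.mem_iff.mp hx)⟩
  · rintro ⟨hnd, hlen, hb⟩
    rw [← hR]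
    apply List.perm_of_nodup_nodup_toFinset_eq hnd hRnd
    apply Finset.eq_of_subset_of_card_le
    · intro x hx
      simp only [List.mem_toFinset] at hx ⊢
      exact (hRmem x).mpr (hb x hx)
    · rw [List.toFinset_card_of_nodup hRnd, List.toFinset_card_of_nodup hnd, hRlen, hlen]

lemma gammaT_isPermList (T : Tree Unit) : IsPermList T.numNodes (gammaT T) := by
  obtain ⟨h1, h2, h3⟩ := gammaT_spec T
  exact isPermList_iff.mpr ⟨h2, h1, h3⟩

lemma phi_gammaT : ∀ T : Tree Unit, phi (gammaT T) = T := by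
  intro T
  induction T with
  | nil => exact phi_nil
  | node u T₁ T₂ ih1 ih2 =>
    rw [gammaT, phi_split]
    · obtain ⟨hl1, hn1, hb1⟩ := gammaT_spec T₁
      obtain ⟨hl2, hn2, hb2⟩ := gammaT_spec T₂
      rw [phi_map_add _ _ _ le_rfl hn1, phi_map_add _ _ _ le_rfl hn2, ih1, ih2]
    · intro y hy
      simp only [List.mem_map] at hy
      obtain ⟨z, hz, rfl⟩ := hy
      have := ((gammaT_spec T₁).2.2 z hz).1; omega
    · intro y hy
      simp only [List.mem_map] at hy
      obtain ⟨z, hz, rfl⟩ := hy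
      have := ((gammaT_spec T₂).2.2 z hz).1; omega

lemma gammaT_mem_STree (T : Tree Unit) : gammaT T ∈ STree T :=
  ⟨gammaT_isPermList T, phi_gammaT T⟩

lemma isPermList_mem_iff {n : ℕ} {l : List ℤ} (h : IsPermList n l) {x : ℤ} :
    x ∈ l ↔ 1 ≤ x ∧ x ≤ (n : ℤ) := by
  rw [isPermList_def] at h
  rw [h.mem_iff]
  simp only [List.mem_map, List.mem_range]
  constructor
  · rintro ⟨k, hk, rfl⟩; omega
  · rintro ⟨h1, h2⟩; exact ⟨(x - 1).toNat, by omega, by omega⟩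

lemma append_le_append_left : ∀ (z : List ℤ) {u v : List ℤ}, u ≤ v → z ++ u ≤ z ++ v := by
  intro z
  induction z with
  | nil => intro u v h; exact h
  | cons a z ih => intro u v h; exact List.cons_le_cons a (ih h)

lemma lex_le_append : ∀ (x y : List ℤ), x.length = y.length → x ≤ y →
    ∀ (u v : List ℤ), (x = y → u ≤ v) → x ++ u ≤ y ++ v := by
  intro x
  induction x with
  | nil =>
    intro y hlen _ u v h2
    rw [List.length_eq_zero_iff.mp hlen.symm] at h2 ⊢
    exact h2 rfl
  | cons a x ih =>
    intro y hlen hxy u v h2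
    cases y with
    | nil => simp at hlen
    | cons c y =>
      rcases le_iff_lt_or_eq.mp hxy with hlt | heq
      · have hlex : List.Lex (· < ·) (a :: x) (c :: y) := hlt
        cases hlex with
        | rel h =>
          exact le_of_lt (List.Lex.rel h : List.Lex (· < ·) ((a :: x) ++ u) ((c :: y) ++ v))
        | cons h =>
          have hx : x ++ u ≤ y ++ v := by
            refine ih y (by simpa using hlen) (le_of_lt h) u v ?_
            intro he
            exact absurd (he ▸ h) (lt_irrefl y)
          exact List.cons_le_cons a hx
      · rw [heq]
        exact append_le_append_left _ (h2 heq)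

lemma gammaT_min_gen : ∀ T : Tree Unit, ∀ b : ℤ, ∀ A : List ℤ, A.Nodup →
    (∀ x ∈ A, b ≤ x) → phi A = T → (gammaT T).map (· + (b - 1)) ≤ A := by
  intro T
  induction T with
  | nil =>
    intro b A _ _ hphi
    rw [phi_eq_nil_iff.mp hphi]
    simp [gammaT]
  | node u T₁ T₂ ih1 ih2 =>
    intro b A hnd hbd hphi
    have hne : A ≠ [] := by
      intro h; rw [h, phi_nil] at hphi; exact absurd hphi (by simp)
    obtain ⟨A₁, x, A₂, rfl, hA1, hA2⟩ := phi_decomp hne hnd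
    rw [phi_split _ _ _ hA1 hA2] at hphi
    obtain ⟨rfl, hp1, hp2⟩ : u = () ∧ phi A₁ = T₁ ∧ phi A₂ = T₂ := by
      injection hphi with h1 h2 h3; exact ⟨h1.symm, h2, h3⟩
    rw [List.nodup_append] at hnd
    obtain ⟨hndA1, hndx2, hdisj⟩ := hnd
    have hndA2 : A₂.Nodup := (List.nodup_cons.mp hndx2).2
    have hbx : b ≤ x := hbd x (by simp)
    have hlen1 : A₁.length = T₁.numNodes := by rw [← hp1]; exact (phi_len hndA1).symm
    set k : ℕ := T₁.numNodes with hk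
    -- rewrite goal
    rw [gammaT]
    have hmap1 : (List.map (· + 1) (gammaT T₁)).map (· + (b - 1)) =
        (gammaT T₁).map (· + b) := by
      rw [List.map_map]; congr 1; funext z; simp only [Function.comp]; ring
    have hmap2 : (List.map (· + ((k : ℤ) + 1)) (gammaT T₂)).map (· + (b - 1)) =
        (gammaT T₂).map (· + ((k : ℤ) + b)) := by
      rw [List.map_map]; congr 1; funext z; simp only [Function.comp]; ring
    rw [List.map_append, List.map_cons, hmap1, hmap2]
    have hle1 : (gammaT T₁).map (· + b) ≤ A₁ := by
      have := ih1 (b + 1) A₁ hndA1 (fun z hz => by have := hA1 z hz; omega) hp1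
      simpa using this
    refine lex_le_append _ _ ?_ hle1 _ _ ?_
    · rw [List.length_map, (gammaT_spec T₁).1, hlen1]
    · intro heqA1
      show (1 + (b - 1)) :: _ ≤ x :: A₂
      have h1b : 1 + (b - 1) = b := by ring
      rw [h1b]
      rcases lt_or_eq_of_le hbx with hlt | heq
      · exact le_of_lt (List.Lex.rel hlt : List.Lex (· < ·) (b :: _) (x :: A₂))
      · subst heq
        apply List.cons_le_cons
        have hA2b : ∀ z ∈ A₂, b + (k : ℤ) + 1 ≤ z := by
          intro z hz
          have hz1 : b + 1 ≤ z := by have := hA2 z hz; omega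
          by_contra hcon
          push_neg at hcon
          have hzmem : z ∈ A₁ := by
            rw [← heqA1]
            simp only [List.mem_map]
            refine ⟨z - b, ?_, by ring⟩
            rw [isPermList_mem_iff (gammaT_isPermList T₁)]
            dsimp only [Tree.numNodes]; constructor <;> omega
          exact hdisj z hzmem z (by simp [hz]) rfl
        have := ih2 (b + (k : ℤ) + 1) A₂ hndA2 hA2b hp2
        have hmm : (gammaT T₂).map (· + (b + (k : ℤ) + 1 - 1)) =
            (gammaT T₂).map (· + ((k : ℤ) + b)) := by
          congr 1; funext z; ring_nf
        rwa [hmm] at this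

lemma gv_eq_getElem {l : List ℤ} {p : ℕ} (h1 : 1 ≤ p) (h2 : p ≤ l.length) :
    gv l p = l[p - 1]'(by omega) := by
  unfold gv
  rw [List.getD_eq_getElem l 0 (by omega)]

lemma gv_mem {l : List ℤ} {p : ℕ} (h1 : 1 ≤ p) (h2 : p ≤ l.length) : gv l p ∈ l := by
  rw [gv_eq_getElem h1 h2]; exact List.getElem_mem _

lemma gv_bounds {n : ℕ} {l : List ℤ} (h : IsPermList n l) {p : ℕ} (h1 : 1 ≤ p) (h2 : p ≤ n) :
    1 ≤ gv l p ∧ gv l p ≤ (n : ℤ) := by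
  have hlen : l.length = n := by
    rw [isPermList_def] at h
    rw [h.length_eq]; simp
  exact (isPermList_mem_iff h).mp (gv_mem h1 (by omega))

section NodeWord

variable {k m : ℕ} {l₁ l₂ : List ℤ} (h₁ : IsPermList k l₁) (h₂ : IsPermList m l₂)

lemma isPermList_length {n : ℕ} {l : List ℤ} (h : IsPermList n l) : l.length = n := by
  rw [isPermList_def] at h
  rw [h.length_eq]; simp

include h₁ h₂

lemma nodeWord_isPermList :
    IsPermList (k + m + 1) (l₁.map (· + 1) ++ 1 :: l₂.map (· + ((k : ℤ) + 1))) := by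
  rw [isPermList_iff] at h₁ h₂ ⊢
  obtain ⟨hn1, hl1, hb1⟩ := h₁
  obtain ⟨hn2, hl2, hb2⟩ := h₂
  refine ⟨?_, by simp [hl1, hl2]; try omega, ?_⟩
  · rw [List.nodup_append, List.nodup_cons]
    refine ⟨hn1.map (fun a b h => by simpa using h), ⟨?_, hn2.map (fun a b h => by simpa using h)⟩, ?_⟩
    · simp only [List.mem_map, not_exists]
      rintro z ⟨hz, hz1⟩
      have := (hb2 z hz).1
      omega
    · intro a ha b hb hab; subst hab
      simp only [List.mem_map] at ha
      obtain ⟨z, hz, rfl⟩ := ha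
      have hz1 := hb1 z hz
      rcases List.mem_cons.mp hb with h | h
      · omega
      · simp only [List.mem_map] at h
        obtain ⟨w, hw, hww⟩ := h
        have := hb2 w hw
        omega
  · intro x hx
    rcases List.mem_append.mp hx with h | h
    · simp only [List.mem_map] at h
      obtain ⟨z, hz, rfl⟩ := h
      have := hb1 z hz
      push_cast; omega
    · rcases List.mem_cons.mp h with h | h
      · subst h; exact ⟨le_refl 1, by push_cast; omega⟩
      · simp only [List.mem_map] at h
        obtain ⟨z, hz, rfl⟩ := h
        have := hb2 z hz
        push_cast; omega

lemma gv_node_left {p : ℕ} (hp1 : 1 ≤ p) (hp2 : p ≤ k) :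
    gv (l₁.map (· + 1) ++ 1 :: l₂.map (· + ((k : ℤ) + 1))) p = gv l₁ p + 1 := by
  have hl1 : l₁.length = k := isPermList_length h₁
  unfold gv
  have h : p - 1 < (l₁.map (· + 1)).length := by simp [hl1]; try omega
  rw [List.getD_eq_getElem _ 0 (by simp [hl1]; try omega), List.getElem_append_left h,
    List.getElem_map, List.getD_eq_getElem _ 0 (by omega)]

lemma gv_node_mid :
    gv (l₁.map (· + 1) ++ 1 :: l₂.map (· + ((k : ℤ) + 1))) (k + 1) = 1 := by
  have hl1 : l₁.length = k := isPermList_length h₁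
  have hl2 : l₂.length = m := isPermList_length h₂
  unfold gv
  have hidx : k + 1 - 1 = k := by omega
  rw [hidx, List.getD_eq_getElem _ 0 (by simp [hl1, hl2]; try omega),
      List.getElem_append_right (by simp [hl1])]
  simp [hl1]

lemma gv_node_right {p : ℕ} (hp1 : k + 2 ≤ p) (hp2 : p ≤ k + m + 1) :
    gv (l₁.map (· + 1) ++ 1 :: l₂.map (· + ((k : ℤ) + 1))) p
      = gv l₂ (p - (k + 1)) + ((k : ℤ) + 1) := by
  have hl1 : l₁.length = k := isPermList_length h₁
  have hl2 : l₂.length = m := isPermList_length h₂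
  unfold gv
  rw [List.getD_eq_getElem?_getD, List.getD_eq_getElem?_getD,
      List.getElem?_append_right (by simp [hl1]; try omega)]
  have hidx : p - 1 - (l₁.map (· + 1)).length = (p - (k + 1) - 1) + 1 := by
    simp [hl1]; try omega
  rw [hidx, List.getElem?_cons_succ, List.getElem?_map]
  have hlt : p - (k + 1) - 1 < l₂.length := by omega
  rw [List.getElem?_eq_getElem hlt]
  simp

end NodeWord

section NodeWord2

variable {k m : ℕ} {l₁ l₂ : List ℤ} (h₁ : IsPermList k l₁) (h₂ : IsPermList m l₂)

include h₁ h₂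

lemma lfun_node_left {j : ℕ} (hj1 : 1 ≤ j) (hj2 : j ≤ k) :
    lfun (l₁.map (· + 1) ++ 1 :: l₂.map (· + ((k : ℤ) + 1))) j = lfun l₁ j := by
  unfold lfun
  congr 1
  ext p
  simp only [Set.mem_setOf_eq]
  constructor
  · rintro ⟨hp1, hp2, hcond⟩
    refine ⟨hp1, hp2, fun m' hm1 hm2 => ?_⟩
    have := hcond m' hm1 hm2
    rwa [gv_node_left h₁ h₂ hj1 hj2, gv_node_left h₁ h₂ (by omega) (by omega),
      add_le_add_iff_right] at this
  · rintro ⟨hp1, hp2, hcond⟩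
    refine ⟨hp1, hp2, fun m' hm1 hm2 => ?_⟩
    have := hcond m' hm1 hm2
    rw [gv_node_left h₁ h₂ hj1 hj2, gv_node_left h₁ h₂ (by omega) (by omega)]
    omega

lemma rfun_node_left {j : ℕ} (hj1 : 1 ≤ j) (hj2 : j ≤ k) :
    rfun (l₁.map (· + 1) ++ 1 :: l₂.map (· + ((k : ℤ) + 1))) j = rfun l₁ j := by
  have hγ := nodeWord_isPermList h₁ h₂
  have hγlen : (l₁.map (· + 1) ++ 1 :: l₂.map (· + ((k : ℤ) + 1))).length = k + m + 1 :=
    isPermList_length hγ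
  have hl1 : l₁.length = k := isPermList_length h₁
  have hgvj : 1 ≤ gv l₁ j := (gv_bounds h₁ hj1 hj2).1
  unfold rfun
  congr 1
  ext p
  simp only [Set.mem_setOf_eq, hγlen, hl1]
  constructor
  · rintro ⟨hp1, hp2, hcond⟩
    have hpk : p ≤ k := by
      by_contra hcon
      push_neg at hcon
      have := hcond (k + 1) (by omega) (by omega)
      rw [gv_node_mid h₁ h₂, gv_node_left h₁ h₂ hj1 hj2] at this
      omega
    refine ⟨hp1, hpk, fun m' hm1 hm2 => ?_⟩
    have := hcond m' hm1 hm2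
    rwa [gv_node_left h₁ h₂ hj1 hj2, gv_node_left h₁ h₂ (by omega) (by omega),
      add_le_add_iff_right] at this
  · rintro ⟨hp1, hp2, hcond⟩
    refine ⟨hp1, by omega, fun m' hm1 hm2 => ?_⟩
    have := hcond m' hm1 hm2
    rw [gv_node_left h₁ h₂ hj1 hj2, gv_node_left h₁ h₂ (by omega) (by omega)]
    omega

lemma lfun_node_mid :
    lfun (l₁.map (· + 1) ++ 1 :: l₂.map (· + ((k : ℤ) + 1))) (k + 1) = 1 := by
  have hγ := nodeWord_isPermList h₁ h₂
  unfold lfun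
  have h1mem : 1 ∈ {p | 1 ≤ p ∧ p ≤ k + 1 ∧ ∀ m',
      p ≤ m' → m' ≤ k + 1 → gv (l₁.map (· + 1) ++ 1 :: l₂.map (· + ((k : ℤ) + 1))) (k + 1)
        ≤ gv (l₁.map (· + 1) ++ 1 :: l₂.map (· + ((k : ℤ) + 1))) m'} := by
    refine ⟨le_refl 1, by omega, fun m' hm1 hm2 => ?_⟩
    rw [gv_node_mid h₁ h₂]
    exact (gv_bounds hγ hm1 (by omega)).1
  exact le_antisymm (Nat.sInf_le h1mem) (Nat.sInf_mem ⟨1, h1mem⟩).1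

lemma rfun_node_mid :
    rfun (l₁.map (· + 1) ++ 1 :: l₂.map (· + ((k : ℤ) + 1))) (k + 1) = k + m + 1 := by
  have hγ := nodeWord_isPermList h₁ h₂
  have hγlen : (l₁.map (· + 1) ++ 1 :: l₂.map (· + ((k : ℤ) + 1))).length = k + m + 1 :=
    isPermList_length hγ
  unfold rfun
  have hnmem : k + m + 1 ∈ {p | k + 1 ≤ p ∧
      p ≤ (l₁.map (· + 1) ++ 1 :: l₂.map (· + ((k : ℤ) + 1))).length ∧ ∀ m',
      k + 1 ≤ m' → m' ≤ p → gv (l₁.map (· + 1) ++ 1 :: l₂.map (· + ((k : ℤ) + 1))) (k + 1)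
        ≤ gv (l₁.map (· + 1) ++ 1 :: l₂.map (· + ((k : ℤ) + 1))) m'} := by
    refine ⟨by omega, by rw [hγlen], fun m' hm1 hm2 => ?_⟩
    rw [gv_node_mid h₁ h₂]
    exact (gv_bounds hγ (by omega) (by omega)).1
  refine le_antisymm (csSup_le ⟨_, hnmem⟩ (fun p hp => ?_)) (le_csSup ⟨k + m + 1, fun p hp => ?_⟩ hnmem)
  · have := hp.2.1; rwa [hγlen] at this
  · have := hp.2.1; rwa [hγlen] at this

lemma lfun_node_right {j : ℕ} (hj1 : k + 2 ≤ j) (hj2 : j ≤ k + m + 1) :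
    lfun (l₁.map (· + 1) ++ 1 :: l₂.map (· + ((k : ℤ) + 1))) j
      = lfun l₂ (j - (k + 1)) + (k + 1) := by
  have hgvj : gv (l₁.map (· + 1) ++ 1 :: l₂.map (· + ((k : ℤ) + 1))) j
      = gv l₂ (j - (k + 1)) + ((k : ℤ) + 1) := gv_node_right h₁ h₂ hj1 hj2
  have hgvjpos : 1 ≤ gv l₂ (j - (k + 1)) := (gv_bounds h₂ (by omega) (by omega)).1
  unfold lfun
  set S := {p | 1 ≤ p ∧ p ≤ j ∧ ∀ m',
      p ≤ m' → m' ≤ j → gv (l₁.map (· + 1) ++ 1 :: l₂.map (· + ((k : ℤ) + 1))) j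
        ≤ gv (l₁.map (· + 1) ++ 1 :: l₂.map (· + ((k : ℤ) + 1))) m'} with hS
  set S₂ := {p | 1 ≤ p ∧ p ≤ j - (k + 1) ∧ ∀ m',
      p ≤ m' → m' ≤ j - (k + 1) → gv l₂ (j - (k + 1)) ≤ gv l₂ m'} with hS₂
  have hSmem : ∀ p ∈ S, k + 2 ≤ p ∧ p - (k + 1) ∈ S₂ := by
    rintro p ⟨hp1, hp2, hcond⟩
    have hpk : k + 2 ≤ p := by
      by_contra hcon
      push_neg at hcon
      have := hcond (k + 1) (by omega) (by omega)
      rw [gv_node_mid h₁ h₂, hgvj] at this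
      omega
    refine ⟨hpk, by omega, by omega, fun m' hm1 hm2 => ?_⟩
    have := hcond (m' + (k + 1)) (by omega) (by omega)
    rw [hgvj, gv_node_right h₁ h₂ (by omega) (by omega)] at this
    have heq : m' + (k + 1) - (k + 1) = m' := by omega
    rw [heq] at this
    omega
  have hSmem' : ∀ q ∈ S₂, q + (k + 1) ∈ S := by
    rintro q ⟨hq1, hq2, hcond⟩
    refine ⟨by omega, by omega, fun m' hm1 hm2 => ?_⟩
    rw [hgvj, gv_node_right h₁ h₂ (by omega) (by omega)]
    have := hcond (m' - (k + 1)) (by omega) (by omega)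
    omega
  have hS₂ne : S₂.Nonempty := ⟨j - (k + 1), ⟨by omega, le_refl _, fun m' hm1 hm2 => by
    have hm : m' = j - (k + 1) := by omega
    rw [hm]⟩⟩
  have hSne : S.Nonempty := ⟨j, ⟨by omega, le_refl _, fun m' hm1 hm2 => by
    have hm : m' = j := by omega
    rw [hm]⟩⟩
  have h1 := hSmem _ (Nat.sInf_mem hSne)
  have h2 := hSmem' _ (Nat.sInf_mem hS₂ne)
  have le1 : sInf S ≤ sInf S₂ + (k + 1) := Nat.sInf_le h2
  have le2 : sInf S₂ ≤ sInf S - (k + 1) := Nat.sInf_le h1.2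
  omega

lemma rfun_node_right {j : ℕ} (hj1 : k + 2 ≤ j) (hj2 : j ≤ k + m + 1) :
    rfun (l₁.map (· + 1) ++ 1 :: l₂.map (· + ((k : ℤ) + 1))) j
      = rfun l₂ (j - (k + 1)) + (k + 1) := by
  have hγ := nodeWord_isPermList h₁ h₂
  have hγlen : (l₁.map (· + 1) ++ 1 :: l₂.map (· + ((k : ℤ) + 1))).length = k + m + 1 :=
    isPermList_length hγ
  have hl2 : l₂.length = m := isPermList_length h₂
  have hgvj : gv (l₁.map (· + 1) ++ 1 :: l₂.map (· + ((k : ℤ) + 1))) j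
      = gv l₂ (j - (k + 1)) + ((k : ℤ) + 1) := gv_node_right h₁ h₂ hj1 hj2
  unfold rfun
  set S := {p | j ≤ p ∧ p ≤ (l₁.map (· + 1) ++ 1 :: l₂.map (· + ((k : ℤ) + 1))).length ∧ ∀ m',
      j ≤ m' → m' ≤ p → gv (l₁.map (· + 1) ++ 1 :: l₂.map (· + ((k : ℤ) + 1))) j
        ≤ gv (l₁.map (· + 1) ++ 1 :: l₂.map (· + ((k : ℤ) + 1))) m'} with hS
  set S₂ := {p | j - (k + 1) ≤ p ∧ p ≤ l₂.length ∧ ∀ m',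
      j - (k + 1) ≤ m' → m' ≤ p → gv l₂ (j - (k + 1)) ≤ gv l₂ m'} with hS₂
  have hSmem : ∀ p ∈ S, p - (k + 1) ∈ S₂ := by
    rintro p ⟨hp1, hp2, hcond⟩
    rw [hγlen] at hp2
    refine ⟨by omega, by omega, fun m' hm1 hm2 => ?_⟩
    have := hcond (m' + (k + 1)) (by omega) (by omega)
    rw [hgvj, gv_node_right h₁ h₂ (by omega) (by omega)] at this
    have heq : m' + (k + 1) - (k + 1) = m' := by omega
    rw [heq] at this
    omega
  have hSmem' : ∀ q ∈ S₂, q + (k + 1) ∈ S := by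
    rintro q ⟨hq1, hq2, hcond⟩
    refine ⟨by omega, by rw [hγlen]; omega, fun m' hm1 hm2 => ?_⟩
    rw [hgvj, gv_node_right h₁ h₂ (by omega) (by omega)]
    have := hcond (m' - (k + 1)) (by omega) (by omega)
    omega
  have hS₂ne : S₂.Nonempty := ⟨j - (k + 1), ⟨le_refl _, by omega, fun m' hm1 hm2 => by
    have hm : m' = j - (k + 1) := by omega
    rw [hm]⟩⟩
  have hSne : S.Nonempty := ⟨j, ⟨le_refl _, by rw [hγlen]; omega, fun m' hm1 hm2 => by
    have hm : m' = j := by omega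
    rw [hm]⟩⟩
  have hSbdd : BddAbove S := ⟨k + m + 1, fun p hp => by
    have := hp.2.1; rwa [hγlen] at this⟩
  have hS₂bdd : BddAbove S₂ := ⟨m, fun p hp => by
    have := hp.2.1; rwa [hl2] at this⟩
  have hmem1 := Nat.sSup_mem hSne hSbdd
  have hmem2 := Nat.sSup_mem hS₂ne hS₂bdd
  have hj3 : j ≤ sSup S := hmem1.1
  have le1 : sSup S - (k + 1) ≤ sSup S₂ := le_csSup hS₂bdd (hSmem _ hmem1)
  have le2 : sSup S₂ + (k + 1) ≤ sSup S := le_csSup hSbdd (hSmem' _ hmem2)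
  omega

end NodeWord2

lemma prod_Icc_split (f : ℕ → ℂ) (k m : ℕ) :
    ∏ j ∈ Finset.Icc 1 (k + m + 1), f j =
      ((∏ j ∈ Finset.Icc 1 k, f j) * f (k + 1)) * ∏ j ∈ Finset.Icc 1 m, f (j + (k + 1)) := by
  have h0 : ∀ n : ℕ, Finset.Icc 1 n = Finset.Ioc 0 n := fun n => Finset.Icc_add_one_left_eq_Ioc 0 n
  rw [h0, h0]
  have h1 : ∏ j ∈ Finset.Ioc 0 (k + 1), f j = (∏ j ∈ Finset.Ioc 0 k, f j) * f (k + 1) :=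
    Finset.prod_Ioc_succ_top (Nat.zero_le k) f
  have h2 : ∏ j ∈ Finset.Icc 1 m, f (j + (k + 1)) = ∏ j ∈ Finset.Ioc (k + 1) (k + m + 1), f j := by
    apply Finset.prod_nbij' (fun j => j + (k + 1)) (fun j => j - (k + 1))
    · intro a ha
      simp only [Finset.mem_Icc] at ha
      simp only [Finset.mem_Ioc]
      omega
    · intro a ha
      simp only [Finset.mem_Ioc] at ha
      simp only [Finset.mem_Icc]
      omega
    · intro a ha; omega
    · intro a ha
      simp only [Finset.mem_Ioc] at ha
      omega
    · intro a ha; rfl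
  rw [h2, ← h1, Finset.prod_Ioc_consecutive f (by omega) (by omega)]

lemma dT_pos {T : Tree Unit} (h : T ≠ Tree.nil) : 1 ≤ dT T := by
  induction T with
  | nil => exact absurd rfl h
  | node u T₁ T₂ ih1 ih2 =>
    rw [dT]
    rcases eq_or_ne T₂ Tree.nil with h2 | h2
    · simp [h2]
    · simp only [if_neg h2]
      have := ih2 h2
      omega

lemma numNodes_pos {T : Tree Unit} (h : T ≠ Tree.nil) : 1 ≤ T.numNodes := by
  cases T with
  | nil => exact absurd rfl h
  | node u T₁ T₂ => simp [Tree.numNodes]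

theorem OmegaC_gammaT (ε : ℝ) :
    ∀ (T : Tree Unit) (V : ℕ → ℂ) (F : ℕ → ℝ),
    OmegaC ε T V F =
      (-Complex.I) ^ T.numNodes * (-1) ^ (dT T - 1)
        * (∏ j ∈ Finset.Icc 1 T.numNodes, V j)
        * ∏ j ∈ Finset.Icc 1 T.numNodes,
            (Complex.I * (F (lfun (gammaT T) j) : ℂ)
              - Complex.I * (F (rfun (gammaT T) j + 1) : ℂ)
              + ((rfun (gammaT T) j - lfun (gammaT T) j + 1 : ℕ) : ℂ) * (ε : ℂ))⁻¹ := by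
  intro T
  induction T with
  | nil =>
    intro V F
    rw [OmegaC]
    simp [dT, Tree.numNodes]
  | node u T₁ T₂ ih1 ih2 =>
    intro V F
    have h₁ := gammaT_isPermList T₁
    have h₂ := gammaT_isPermList T₂
    have hnum : (Tree.node u T₁ T₂).numNodes = T₁.numNodes + T₂.numNodes + 1 := rfl
    rw [OmegaC, hnum, gammaT, prod_Icc_split, prod_Icc_split]
    have hleft : ∀ j ∈ Finset.Icc 1 T₁.numNodes,
        (Complex.I * (F (lfun ((gammaT T₁).map (· + 1) ++
              1 :: (gammaT T₂).map (· + ((T₁.numNodes : ℤ) + 1))) j) : ℂ)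
          - Complex.I * (F (rfun ((gammaT T₁).map (· + 1) ++
              1 :: (gammaT T₂).map (· + ((T₁.numNodes : ℤ) + 1))) j + 1) : ℂ)
          + ((rfun ((gammaT T₁).map (· + 1) ++
              1 :: (gammaT T₂).map (· + ((T₁.numNodes : ℤ) + 1))) j
            - lfun ((gammaT T₁).map (· + 1) ++
              1 :: (gammaT T₂).map (· + ((T₁.numNodes : ℤ) + 1))) j + 1 : ℕ) : ℂ) * (ε : ℂ))⁻¹
        = (Complex.I * (F (lfun (gammaT T₁) j) : ℂ)
            - Complex.I * (F (rfun (gammaT T₁) j + 1) : ℂ)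
            + ((rfun (gammaT T₁) j - lfun (gammaT T₁) j + 1 : ℕ) : ℂ) * (ε : ℂ))⁻¹ := by
      intro j hj
      rw [Finset.mem_Icc] at hj
      rw [lfun_node_left h₁ h₂ hj.1 hj.2, rfun_node_left h₁ h₂ hj.1 hj.2]
    have hright : ∀ j ∈ Finset.Icc 1 T₂.numNodes,
        (Complex.I * (F (lfun ((gammaT T₁).map (· + 1) ++
              1 :: (gammaT T₂).map (· + ((T₁.numNodes : ℤ) + 1))) (j + (T₁.numNodes + 1))) : ℂ)
          - Complex.I * (F (rfun ((gammaT T₁).map (· + 1) ++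
              1 :: (gammaT T₂).map (· + ((T₁.numNodes : ℤ) + 1))) (j + (T₁.numNodes + 1)) + 1) : ℂ)
          + ((rfun ((gammaT T₁).map (· + 1) ++
              1 :: (gammaT T₂).map (· + ((T₁.numNodes : ℤ) + 1))) (j + (T₁.numNodes + 1))
            - lfun ((gammaT T₁).map (· + 1) ++
              1 :: (gammaT T₂).map (· + ((T₁.numNodes : ℤ) + 1))) (j + (T₁.numNodes + 1)) + 1 : ℕ) : ℂ)
            * (ε : ℂ))⁻¹
        = (Complex.I * ((fun i => F (i + (T₁.numNodes + 1))) (lfun (gammaT T₂) j) : ℂ)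
            - Complex.I * ((fun i => F (i + (T₁.numNodes + 1))) (rfun (gammaT T₂) j + 1) : ℂ)
            + ((rfun (gammaT T₂) j - lfun (gammaT T₂) j + 1 : ℕ) : ℂ) * (ε : ℂ))⁻¹ := by
      intro j hj
      rw [Finset.mem_Icc] at hj
      have e1 := lfun_node_right h₁ h₂ (j := j + (T₁.numNodes + 1)) (by dsimp only [Tree.numNodes] at *; omega) (by dsimp only [Tree.numNodes] at *; omega)
      have e2 := rfun_node_right h₁ h₂ (j := j + (T₁.numNodes + 1)) (by dsimp only [Tree.numNodes] at *; omega) (by dsimp only [Tree.numNodes] at *; omega)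
      have e3 : j + (T₁.numNodes + 1) - (T₁.numNodes + 1) = j := by omega
      rw [e3] at e1 e2
      rw [e1, e2]
      have a2 : rfun (gammaT T₂) j + (T₁.numNodes + 1) + 1
          = (rfun (gammaT T₂) j + 1) + (T₁.numNodes + 1) := by omega
      have a3 : rfun (gammaT T₂) j + (T₁.numNodes + 1)
            - (lfun (gammaT T₂) j + (T₁.numNodes + 1)) + 1
          = rfun (gammaT T₂) j - lfun (gammaT T₂) j + 1 := by omega
      rw [a2, a3]
    rw [Finset.prod_congr rfl hleft, Finset.prod_congr rfl hright,
      lfun_node_mid h₁ h₂, rfun_node_mid h₁ h₂]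
    have a4 : T₁.numNodes + T₂.numNodes + 1 - 1 + 1 = T₁.numNodes + T₂.numNodes + 1 := by omega
    rw [a4]
    rw [div_eq_mul_inv]
    have hIcc0 : Finset.Icc 1 0 = (∅ : Finset ℕ) := Finset.Icc_eq_empty (by omega)
    have hnil0 : (Tree.nil : Tree Unit).numNodes = 0 := rfl
    rcases eq_or_ne T₁ Tree.nil with h1 | h1
    · subst h1
      rw [if_pos rfl]
      rcases eq_or_ne T₂ Tree.nil with h2 | h2
      · subst h2
        rw [if_pos rfl]
        simp only [hnil0, hIcc0, Finset.prod_empty,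
          show dT (Tree.node u Tree.nil Tree.nil) - 1 = 0 from rfl, Nat.zero_add]
        ring
      · rw [if_neg h2, ih2]
        obtain ⟨e₂, he₂⟩ := Nat.exists_eq_add_of_le (dT_pos h2)
        have hd1 : dT (Tree.node u Tree.nil T₂) - 1 = e₂ := by
          rw [dT, if_pos rfl, if_neg h2, he₂]; omega
        have hd2 : dT T₂ - 1 = e₂ := by omega
        simp only [hnil0, hIcc0, Finset.prod_empty, hd1, hd2, Nat.zero_add]
        ring
    · rw [if_neg h1, ih1]
      obtain ⟨e₁, he₁⟩ := Nat.exists_eq_add_of_le (dT_pos h1)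
      have hd2 : dT T₁ - 1 = e₁ := by omega
      rcases eq_or_ne T₂ Tree.nil with h2 | h2
      · subst h2
        rw [if_pos rfl]
        have hd1 : dT (Tree.node u T₁ Tree.nil) - 1 = e₁ + 1 := by
          rw [dT, if_neg h1, if_pos rfl, he₁]; omega
        simp only [hnil0, hIcc0, Finset.prod_empty, hd1, hd2, Nat.add_zero]
        ring
      · rw [if_neg h2, ih2]
        obtain ⟨e₂, he₂⟩ := Nat.exists_eq_add_of_le (dT_pos h2)
        have hd1 : dT (Tree.node u T₁ T₂) - 1 = e₁ + e₂ + 1 := by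
          rw [dT, if_neg h1, if_neg h2, he₁, he₂]; omega
        have hd3 : dT T₂ - 1 = e₂ := by omega
        rw [hd1, hd2, hd3]
        ring
/-- Explicit non-recursive formula for `Ω_T(V,F)`: with `γ = γ_T` the lexicographically
smallest element of `S_T` and `l, r` as above,
`Ω_T(V,F) = (−i)ⁿ (−1)^{d−1} (Π_j V(j)) Π_j (i F(l(j)) − i F(r(j)+1) + (r(j)−l(j)+1)ε)⁻¹`,
where `d` is the number of right-pointing leaves of `T`. -/
theorem OmegaC_eq (ε : ℝ) (hε : 0 < ε) (T : Tree Unit) (hT : 1 ≤ T.numNodes)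
    (V : ℕ → ℂ) (F : ℕ → ℝ) (γ : List ℤ)
    (hγ : γ ∈ STree T) (hmin : ∀ τ ∈ STree T, γ ≤ τ) :
    OmegaC ε T V F =
      (-Complex.I) ^ T.numNodes * (-1) ^ (dT T - 1)
        * (∏ j ∈ Finset.Icc 1 T.numNodes, V j)
        * ∏ j ∈ Finset.Icc 1 T.numNodes,
            (Complex.I * (F (lfun γ j) : ℂ) - Complex.I * (F (rfun γ j + 1) : ℂ)
              + ((rfun γ j - lfun γ j + 1 : ℕ) : ℂ) * (ε : ℂ))⁻¹ := by
  have hle1 : γ ≤ gammaT T := hmin _ (gammaT_mem_STree T)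
  have hnd : γ.Nodup := (isPermList_iff.mp hγ.1).1
  have hbd : ∀ x ∈ γ, (1 : ℤ) ≤ x := fun x hx => ((isPermList_iff.mp hγ.1).2.2 x hx).1
  have hle2 : gammaT T ≤ γ := by
    have h := gammaT_min_gen T 1 γ hnd hbd hγ.2
    simpa using h
  have hγeq : γ = gammaT T := le_antisymm hle1 hle2
  rw [hγeq]
  exact OmegaC_gammaT ε T V F
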